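/- Fix integers $n \ge 2$, $d$, $m \ge 1$ and positive integers $j_1, \ldots, j_m$ with $j_1 + \cdots + j_m = n$. Let $\Delta = \{(\alpha_1, \ldots, \alpha_m) \in \mathbb{R}^m : 0 \le \alpha_1 < \alpha_2 < \cdots < \alpha_m < 1\}$, and let $S \subseteq \Delta$ be the set of those $(\alpha_1, \ldots, \alpha_m)$ for which there exist integers $\hat n, \hat d, \hat j_1, \ldots, \hat j_m$ with $0 < \hat n < n$, $0 \le \hat j_k \le j_k$ for all $k$, $\hat j_1 + \cdots + \hat j_m = \hat n$, and $(\hat d + \sum_{k=1}^m \alpha_k \hat j_k)/\hat n = (d + \sum_{k=1}^m \alpha_k j_k)/n$. If $j_{k_0} = 1$ for some $k_0 \in \{1, \ldots, m\}$, then $S$ is nowhere dense in $\Delta$. -/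

import Mathlib

open Finset

/-- Remark 6.1 (final assertion): if some multiplicity `j_{k₀}` equals 1 then
the set of parabolic weights for which semistability can differ from stability
is nowhere dense in the space of admissible weight vectors. -/
theorem stmt_4 (n d : ℤ) (hn : 2 ≤ n) (m : ℕ) (hm : 1 ≤ m)
    (j : Fin m → ℤ) (hj : ∀ k, 0 < j k) (hsum : ∑ k, j k = n)
    (k₀ : Fin m) (hk₀ : j k₀ = 1)
    (Δ S : Set (Fin m → ℝ))
    (hΔ : Δ = {α | StrictMono α ∧ ∀ k, 0 ≤ α k ∧ α k < 1})
    (hS : S = {α ∈ Δ | ∃ (nh dh : ℤ) (jhat : Fin m → ℤ),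
        0 < nh ∧ nh < n ∧ (∀ k, 0 ≤ jhat k ∧ jhat k ≤ j k) ∧
        (∑ k, jhat k) = nh ∧
        ((dh : ℝ) + ∑ k, α k * (jhat k : ℝ)) / (nh : ℝ)
          = ((d : ℝ) + ∑ k, α k * (j k : ℝ)) / (n : ℝ)}) :
    IsNowhereDense (Subtype.val ⁻¹' S : Set Δ) := by
  have hn0 : (0 : ℝ) < (n : ℝ) := by exact_mod_cast (by omega : (0:ℤ) < n)
  -- the coefficient function
  set c : ℤ × (Fin m → ℤ) → Fin m → ℝ :=
    fun p k => (p.1 : ℝ) * (j k : ℝ) - (n : ℝ) * (p.2 k : ℝ) with hc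
  set F : ℤ × (Fin m → ℤ) → (Fin m → ℝ) → ℝ :=
    fun p α => (p.1 : ℝ) * (d : ℝ) + ∑ k, α k * c p k with hF
  -- the finite parameter set
  set T : Set (ℤ × (Fin m → ℤ)) :=
    {p | 0 < p.1 ∧ p.1 < n ∧ ∀ k, 0 ≤ p.2 k ∧ p.2 k ≤ j k} with hT
  have hTfin : T.Finite := by
    apply Set.Finite.subset ((Set.finite_Ioo (0:ℤ) n).prod
      (Set.Finite.pi (fun k => Set.finite_Icc (0:ℤ) (j k))))
    rintro ⟨nh, jh⟩ ⟨h1, h2, h3⟩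
    exact ⟨⟨h1, h2⟩, fun k _ => ⟨(h3 k).1, (h3 k).2⟩⟩
  -- the target set of values
  set G : Set ℝ := {x | ∃ z : ℤ, x = (n : ℝ) * z} with hG
  have hGclosed : IsClosed G := by
    have : G = (fun x : ℝ => x / (n : ℝ)) ⁻¹' (Set.range ((↑) : ℤ → ℝ)) := by
      ext x
      constructor
      · rintro ⟨z, rfl⟩
        exact ⟨z, by field_simp⟩
      · rintro ⟨z, hz⟩
        exact ⟨z, by field_simp at hz; linarith⟩
    rw [this]
    exact Int.isClosedEmbedding_coe_real.isClosed_range.preimage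
      (continuous_id.div_const _)
  set C : Set (Fin m → ℝ) := ⋃ p ∈ T, {α | F p α ∈ G} with hCdef
  have hCclosed : IsClosed C := by
    apply Set.Finite.isClosed_biUnion hTfin
    intro p _
    have hcont : Continuous (F p) := by
      apply Continuous.add continuous_const
      exact continuous_finset_sum _ fun k _ => (continuous_apply k).mul continuous_const
    exact hGclosed.preimage hcont
  -- S ⊆ C
  have hSC : S ⊆ C := by
    intro α hα
    rw [hS] at hα
    obtain ⟨-, nh, dh, jhat, hnh0, hnhn, hjh, -, heq⟩ := hα
    have hnh0' : (0 : ℝ) < (nh : ℝ) := by exact_mod_cast hnh0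
    rw [div_eq_div_iff (ne_of_gt hnh0') (ne_of_gt hn0)] at heq
    refine Set.mem_biUnion (show (nh, jhat) ∈ T from ⟨hnh0, hnhn, hjh⟩) ?_
    refine ⟨dh, ?_⟩
    have hre : ∀ k, α k * c (nh, jhat) k
        = (nh:ℝ) * (α k * (j k : ℝ)) - (n:ℝ) * (α k * (jhat k : ℝ)) := by
      intro k; simp only [hc]; ring
    simp only [hF]
    rw [Finset.sum_congr rfl (fun k _ => hre k), Finset.sum_sub_distrib,
      ← Finset.mul_sum, ← Finset.mul_sum]
    linear_combination (-1 : ℝ) * heq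
  -- closure of the preimage is contained in the preimage of C
  have hsub : closure (Subtype.val ⁻¹' S : Set Δ) ⊆ Subtype.val ⁻¹' C :=
    closure_minimal (Set.preimage_mono hSC) (hCclosed.preimage continuous_subtype_val)
  have hint : interior (Subtype.val ⁻¹' C : Set Δ) = ∅ := by
    rw [Set.eq_empty_iff_forall_notMem]
    intro x hx
    rw [mem_interior_iff_mem_nhds, Metric.mem_nhds_iff] at hx
    obtain ⟨ε, hε, hball⟩ := hx
    set α : Fin m → ℝ := x.val with hαdef
    have hαΔ : α ∈ Δ := x.2
    rw [hΔ] at hαΔ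
    obtain ⟨hmono, hbd⟩ := hαΔ
    -- gap
    set g : ℝ := Finset.univ.inf' (show (Finset.univ : Finset (Fin m)).Nonempty from ⟨k₀, Finset.mem_univ k₀⟩)
      (fun k => if k₀ < k then α k - α k₀ else 1 - α k₀) with hgdef
    have hg : 0 < g := by
      rw [hgdef, Finset.lt_inf'_iff]
      intro k _
      split
      · next h => linarith [hmono h]
      · linarith [(hbd k₀).2]
    set δ : ℝ := min ε g with hδdef
    have hδ : 0 < δ := lt_min hε hg
    -- the perturbed point
    set β : ℝ → Fin m → ℝ := fun t => Function.update α k₀ (α k₀ + t) with hβdef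
    have hβval : ∀ t k, β t k = α k + (if k = k₀ then t else 0) := by
      intro t k
      by_cases h : k = k₀ <;> simp [hβdef, Function.update, h]
    have hFβ : ∀ p t, F p (β t) = F p α + t * c p k₀ := by
      intro p t
      simp only [hF]
      have : ∀ k, β t k * c p k = α k * c p k + (if k = k₀ then t * c p k₀ else 0) := by
        intro k
        rw [hβval]
        by_cases h : k = k₀ <;> simp [h] <;> ring
      rw [Finset.sum_congr rfl (fun k _ => this k), Finset.sum_add_distrib,
        Finset.sum_ite_eq' Finset.univ k₀]
      simp [add_assoc]
    -- the coefficient at k₀ is nonzero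
    have hcne : ∀ p ∈ T, c p k₀ ≠ 0 := by
      intro p hp
      obtain ⟨h1, h2, h3⟩ := hp
      have h4 := h3 k₀
      rw [hk₀] at h4
      have h5 : p.2 k₀ = 0 ∨ p.2 k₀ = 1 := by omega
      have h1' : (0 : ℝ) < (p.1 : ℝ) := by exact_mod_cast h1
      have h2' : ((p.1 : ℤ) : ℝ) < (n : ℝ) := by exact_mod_cast h2
      simp only [hc, hk₀]
      rcases h5 with h | h <;> rw [h] <;> push_cast <;> intro hcon <;> nlinarith
    -- the bad set of perturbation parameters is countable
    set Bad : Set ℝ := {t | β t ∈ C} with hBad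
    have hBadC : Bad.Countable := by
      have hsub' : Bad ⊆ ⋃ p ∈ T, ⋃ z : ℤ, {t : ℝ | F p (β t) = (n:ℝ) * z} := by
        intro t ht
        simp only [hBad, Set.mem_setOf_eq, hCdef, Set.mem_iUnion] at ht ⊢
        obtain ⟨p, hp, z, hz⟩ := ht
        exact ⟨p, hp, z, hz⟩
      refine Set.Countable.mono hsub' ?_
      refine Set.Countable.biUnion hTfin.countable fun p hp => ?_
      refine Set.countable_iUnion fun z => Set.Subsingleton.countable ?_
      intro t₁ h₁ t₂ h₂
      simp only [Set.mem_setOf_eq, hFβ] at h₁ h₂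
      have : t₁ * c p k₀ = t₂ * c p k₀ := by linarith
      exact mul_right_cancel₀ (hcne p hp) this
    -- choose a good t
    have hdense : Dense Badᶜ := hBadC.dense_compl ℝ
    obtain ⟨t, htB, ht⟩ := hdense.exists_mem_open isOpen_Ioo
      (Set.nonempty_Ioo.2 hδ : (Set.Ioo 0 δ).Nonempty)
    obtain ⟨ht0, htδ⟩ := ht
    -- β t lies in Δ
    have hgap : ∀ k, k₀ < k → t < α k - α k₀ := by
      intro k hk
      calc t < δ := htδ
        _ ≤ g := min_le_right _ _
        _ ≤ _ := by
          have := Finset.inf'_le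
            (fun k => if k₀ < k then α k - α k₀ else 1 - α k₀) (Finset.mem_univ k)
          rwa [if_pos hk] at this
    have hlt1 : α k₀ + t < 1 := by
      have := Finset.inf'_le
        (fun k => if k₀ < k then α k - α k₀ else 1 - α k₀) (Finset.mem_univ k₀)
      rw [if_neg (lt_irrefl k₀)] at this
      have h2 : t < 1 - α k₀ := lt_of_lt_of_le (lt_of_lt_of_le htδ (min_le_right _ _)) this
      linarith
    have hβΔ : β t ∈ Δ := by
      rw [hΔ]
      constructor
      · intro k k' hkk'
        rw [hβval, hβval]
        by_cases h : k = k₀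
        · subst h
          rw [if_pos rfl, if_neg hkk'.ne']
          have := hgap k' hkk'
          linarith
        · rw [if_neg h]
          by_cases h' : k' = k₀
          · subst h'
            rw [if_pos rfl]
            have := hmono hkk'
            linarith
          · rw [if_neg h']
            have := hmono hkk'
            linarith
      · intro k
        rw [hβval]
        by_cases h : k = k₀
        · rw [h, if_pos rfl]
          exact ⟨by linarith [(hbd k₀).1], hlt1⟩
        · rw [if_neg h]
          simpa using hbd k
    -- β t is near x
    have hmem : (⟨β t, hβΔ⟩ : Δ) ∈ Metric.ball x ε := by
      rw [Metric.mem_ball, Subtype.dist_eq]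
      rw [dist_pi_lt_iff hε]
      intro k
      show dist (β t k) (α k) < ε
      rw [hβval]
      by_cases h : k = k₀
      · subst h
        rw [if_pos rfl, Real.dist_eq]
        simp only [add_sub_cancel_left]
        rw [abs_of_pos ht0]
        exact lt_of_lt_of_le htδ (min_le_left _ _)
      · rw [if_neg h]
        simpa using hε
    have : β t ∈ C := hball hmem
    exact htB this
  rw [IsNowhereDense, Set.eq_empty_iff_forall_notMem]
  intro x hx
  have := interior_mono hsub hx
  rw [hint] at this
  exact this
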